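/- Let A be a ℚ_p-algebra, Λ ⊆ A a ℤ_p-submodule, m ≥ 1, and a ∈ A an element Λ-bounded at order m (Λ is stable under multiplication by a and (1−a)^i/i ∈ Λ for 1 ≤ i ≤ p^m). Then a^{p^m} ≡ 1 (mod p^m Λ). -/

import Mathlib

/-- `a` is `Λ`-bounded at order `m`: `Λ` is stable under left multiplication by `a`
and `(1-a)^i / i ∈ Λ` for all `1 ≤ i ≤ p^m`. -/
def LambdaBounded (p : ℕ) [Fact p.Prime] {A : Type*} [Ring A] [Algebra ℚ_[p] A]
    [Module ℤ_[p] A] (Λ : Submodule ℤ_[p] A) (m : ℕ) (a : A) : Prop :=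
  (∀ x ∈ Λ, a * x ∈ Λ) ∧ ∀ i : ℕ, 1 ≤ i → i ≤ p ^ m → (i : ℚ_[p])⁻¹ • (1 - a) ^ i ∈ Λ

theorem stmt13 (p : ℕ) [Fact p.Prime] (hp : p.Prime) {A : Type*} [Ring A]
    [Algebra ℚ_[p] A] [Module ℤ_[p] A] [IsScalarTower ℤ_[p] ℚ_[p] A]
    (Λ : Submodule ℤ_[p] A) (m : ℕ) (hm : 1 ≤ m)
    (a : A) (ha : LambdaBounded p Λ m a) :
    ∃ y ∈ Λ, a ^ p ^ m - 1 = ((p : ℤ_[p]) ^ m) • y := by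
  set N : ℕ := p ^ m with hN
  have hN1 : 1 ≤ N := Nat.one_le_pow _ _ hp.pos
  set b : A := 1 - a with hb
  refine ⟨∑ j ∈ Finset.Icc 1 N,
      (((-1 : ℤ_[p]) ^ j * ((N - 1).choose (j - 1) : ℤ_[p]))) •
        ((j : ℚ_[p])⁻¹ • b ^ j), ?_, ?_⟩
  · refine Submodule.sum_mem _ fun j hj => ?_
    simp only [Finset.mem_Icc] at hj
    exact Submodule.smul_mem _ _ (ha.2 j hj.1 hj.2)
  · -- binomial expansion
    have hcomm : Commute (-b) (1 : A) := Commute.one_right _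
    have hexp : a ^ N = ∑ j ∈ Finset.range (N + 1), (-b) ^ j * (N.choose j : A) := by
      have : a = -b + 1 := by rw [hb, neg_sub, sub_add_cancel]
      rw [this, hcomm.add_pow]
      simp
    have key : ∀ j ∈ Finset.Icc 1 N,
        ((p : ℤ_[p]) ^ m) • ((((-1 : ℤ_[p]) ^ j * ((N - 1).choose (j - 1) : ℤ_[p]))) •
          ((j : ℚ_[p])⁻¹ • b ^ j)) = (-b) ^ j * (N.choose j : A) := by
      intro j hj
      simp only [Finset.mem_Icc] at hj
      obtain ⟨hj1, hj2⟩ := hj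
      have hnat : N * (N - 1).choose (j - 1) = N.choose j * j := by
        have h1 := Nat.add_one_mul_choose_eq (N - 1) (j - 1)
        have e1 : N - 1 + 1 = N := by omega
        have e2 : j - 1 + 1 = j := by omega
        simpa only [Nat.succ_eq_add_one, e1, e2] using h1
      have hjne : (j : ℚ_[p]) ≠ 0 := Nat.cast_ne_zero.mpr (by omega)
      rw [smul_smul]
      rw [← IsScalarTower.algebraMap_smul ℚ_[p]
        ((p : ℤ_[p]) ^ m * ((-1 : ℤ_[p]) ^ j * ((N - 1).choose (j - 1) : ℤ_[p]))),
        smul_smul]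
      have hrhs : (-b) ^ j * (N.choose j : A) = ((-1 : ℚ_[p]) ^ j * (N.choose j : ℚ_[p])) • b ^ j := by
        rw [neg_pow, Algebra.smul_def]
        push_cast
        rw [mul_assoc, ← (Nat.cast_commute (N.choose j) (b ^ j)).eq, ← mul_assoc]
      rw [hrhs]
      congr 1
      simp only [PadicInt.algebraMap_apply]
      push_cast
      field_simp
      have : ((p : ℚ_[p]) ^ m) * ((N - 1).choose (j - 1) : ℚ_[p]) = (N.choose j : ℚ_[p]) * j := by
        have := congrArg (Nat.cast (R := ℚ_[p])) hnat
        push_cast [hN] at this ⊢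
        exact this
      ring_nf
      ring_nf at this
      linear_combination this
    rw [Finset.smul_sum, Finset.sum_congr rfl key, hexp]
    have : ∑ j ∈ Finset.range (N + 1), (-b) ^ j * (N.choose j : A)
        = 1 + ∑ j ∈ Finset.Icc 1 N, (-b) ^ j * (N.choose j : A) := by
      rw [Finset.range_eq_Ico, Finset.sum_eq_sum_Ico_succ_bot (by omega), Finset.Ico_add_one_right_eq_Icc]
      simp
    rw [this, add_sub_cancel_left]
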